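/- Let v : 𝒫^n → Δ(C) be an anonymous randomized voting rule that is weakly strategy-proof and satisfies ε-super-weak unanimity. Then v satisfies ε-strong unanimity: for every candidate x ∈ C and every profile P⃗ = (P_1,…,P_n) with top(P_i) = x for every i ∈ [n], v(x,P⃗) ≥ 1 − ε. -/

import Mathlib

open Finset

section VotingPrelims

variable (C : Type) [Fintype C] [DecidableEq C]

/-- A preference ordering over the subset `A` of candidates: a duplicate-free list
enumerating exactly the members of `A`, where earlier entries are more preferred. -/
def PrefOn (A : Finset C) : Type :=
  {l : List C // l.Nodup ∧ l.toFinset = A}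

/-- A (full) preference ordering on the whole candidate set. -/
abbrev Pref : Type := PrefOn C Finset.univ

variable {C}

noncomputable instance instFintypePrefOn (A : Finset C) : Fintype (PrefOn C A) :=
  Fintype.subtype A.toList.permutations.toFinset (by
    intro l
    rw [List.mem_toFinset, List.mem_permutations]
    constructor
    · intro h
      exact ⟨h.nodup_iff.mpr A.nodup_toList,
        by rw [List.toFinset_eq_of_perm _ _ h, Finset.toList_toFinset]⟩
    · rintro ⟨h1, h2⟩
      exact List.perm_of_nodup_nodup_toFinset_eq h1 A.nodup_toList
        (by rw [h2, Finset.toList_toFinset]))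

instance instDecidableEqPrefOn (A : Finset C) : DecidableEq (PrefOn C A) := fun P Q =>
  decidable_of_iff (P.1 = Q.1) Subtype.ext_iff.symm

/-- `P.pref x y` means that `x` is strictly preferred to `y` in `P`. -/
def PrefOn.pref {A : Finset C} (P : PrefOn C A) (x y : C) : Prop :=
  P.1.idxOf x < P.1.idxOf y

theorem Pref.mem_list (P : Pref C) (z : C) : z ∈ P.1 := by
  rw [← List.mem_toFinset, P.2.2]; exact Finset.mem_univ z

/-- The top (most preferred) candidate of a full preference ordering. -/
noncomputable def Pref.top [Nonempty C] (P : Pref C) : C :=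
  P.1.head?.getD (Classical.arbitrary C)

/-- The most preferred candidate of `S` according to the full preference `P`. -/
noncomputable def Pref.topOn [Nonempty C] (P : Pref C) (S : Finset C) : C :=
  (P.1.filter (fun z => decide (z ∈ S))).head?.getD (Classical.arbitrary C)

/-- The number of voters whose top choice is `x`. -/
noncomputable def topCount [Nonempty C] {n : ℕ} (P : Fin n → Pref C) (x : C) : ℕ :=
  (Finset.univ.filter fun i => (P i).top = x).card

/-- The number of voters whose most preferred candidate among `S` is `x`. -/
noncomputable def countTop [Nonempty C] {n : ℕ} (P : Fin n → Pref C) (S : Finset C)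
    (x : C) : ℕ :=
  (Finset.univ.filter fun i => (P i).topOn S = x).card

/-- The restriction of a full preference ordering to the subset `A`. -/
def Pref.restrictTo (P : Pref C) (A : Finset C) : PrefOn C A :=
  ⟨P.1.filter (fun z => decide (z ∈ A)), P.2.1.filter _, by
    ext z
    simp only [List.mem_toFinset, List.mem_filter, decide_eq_true_eq]
    exact ⟨fun h => h.2, fun h => ⟨Pref.mem_list P z, h⟩⟩⟩

/-- `d` is a probability distribution on the candidates. -/
def IsDist (d : C → ℝ) : Prop :=
  (∀ x, 0 ≤ d x) ∧ ∑ x, d x = 1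

/-- `d` is a probability distribution on the candidates, supported on `A`. -/
def IsDistOn (A : Finset C) (d : C → ℝ) : Prop :=
  IsDist d ∧ ∀ x ∉ A, d x = 0

/-- `v` is a (randomized) voting rule: it maps every profile to a distribution. -/
def IsVotingRule {A : Finset C} {n : ℕ} (v : (Fin n → PrefOn C A) → C → ℝ) : Prop :=
  ∀ P, IsDist (v P)

/-- `φ` is a belief, i.e. a probability distribution over preference orderings. -/
def IsBelief {A : Finset C} (φ : PrefOn C A → ℝ) : Prop :=
  (∀ P, 0 ≤ φ P) ∧ ∑ P, φ P = 1

/-- Anonymity: permuting the voters does not change the outcome distribution. -/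
def Anonymous {A : Finset C} {n : ℕ} (v : (Fin n → PrefOn C A) → C → ℝ) : Prop :=
  ∀ σ : Equiv.Perm (Fin n), ∀ P : Fin n → PrefOn C A, v (fun i => P (σ i)) = v P

/-- Utilities take values in `[0,1]`. -/
def Utility01 (u : C → ℝ) : Prop := ∀ x, 0 ≤ u x ∧ u x ≤ 1

/-- The utility function `u` is consistent with the preference ordering `P` on `A`. -/
def ConsistentOn (A : Finset C) (u : C → ℝ) (P : PrefOn C A) : Prop :=
  ∀ x ∈ A, ∀ y ∈ A, (u y < u x ↔ P.pref x y)

/-- The profile in which voter `i` reports `Pi` and the remaining voters report `R`. -/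
def combine {A : Finset C} {n : ℕ} (i : Fin n) (Pi : PrefOn C A)
    (R : {j : Fin n // j ≠ i} → PrefOn C A) : Fin n → PrefOn C A :=
  fun j => if h : j = i then Pi else R ⟨j, h⟩

/-- The expected utility of voter `i` when reporting `Pi`, where the remaining `n-1`
voters' preferences are drawn i.i.d. from the belief `φ`. -/
noncomputable def EU {A : Finset C} {n : ℕ} (v : (Fin n → PrefOn C A) → C → ℝ)
    (u : C → ℝ) (φ : PrefOn C A → ℝ) (i : Fin n) (Pi : PrefOn C A) : ℝ :=
  ∑ R : {j : Fin n // j ≠ i} → PrefOn C A,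
    (∏ j, φ (R j)) * ∑ x, v (combine i Pi R) x * u x

/-- Strategy-proofness with respect to a set `Φ` of (i.i.d.) beliefs. -/
def SPwrt {A : Finset C} {n : ℕ} (v : (Fin n → PrefOn C A) → C → ℝ)
    (Φ : Set (PrefOn C A → ℝ)) : Prop :=
  ∀ i : Fin n, ∀ Pi Pi' : PrefOn C A, ∀ φ ∈ Φ, IsBelief φ →
    ∀ u : C → ℝ, Utility01 u → ConsistentOn A u Pi →
      EU v u φ i Pi' ≤ EU v u φ i Pi

/-- Weak strategy-proofness: strategy-proofness w.r.t. all (i.i.d.) beliefs. -/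
def WeaklySP {n : ℕ} (v : (Fin n → Pref C) → C → ℝ) : Prop :=
  SPwrt v Set.univ

/-- `ε`-super-weak unanimity. -/
def SuperWeakUnanimity [Nonempty C] {n : ℕ} (v : (Fin n → Pref C) → C → ℝ) (ε : ℝ) : Prop :=
  ∀ x : C, ∃ P : Fin n → Pref C, (∀ i, (P i).top = x) ∧ 1 - ε ≤ v P x

/-- `ε`-strong unanimity. -/
def StrongUnanimity [Nonempty C] {n : ℕ} (v : (Fin n → Pref C) → C → ℝ) (ε : ℝ) : Prop :=
  ∀ x : C, ∀ P : Fin n → Pref C, (∀ i, (P i).top = x) → 1 - ε ≤ v P x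

/-- `ε`-Pareto efficiency. -/
def ParetoEff {n : ℕ} (v : (Fin n → Pref C) → C → ℝ) (ε : ℝ) : Prop :=
  ∀ x y : C, ∀ P : Fin n → Pref C, (∀ i, (P i).pref x y) → v P y ≤ ε

/-- An `α`-coarse belief: all probabilities are integer multiples of some `β ≥ α`. -/
def CoarseBelief {A : Finset C} (α : ℝ) (φ : PrefOn C A → ℝ) : Prop :=
  ∃ β : ℝ, α ≤ β ∧ ∀ P, ∃ k : ℤ, φ P = k * β

/-- An `α`-coarse utility function: any two utilities are equal or at least `α` apart. -/
def CoarseUtility (α : ℝ) (u : C → ℝ) : Prop :=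
  ∀ x y : C, u x = u y ∨ α ≤ |u x - u y|

/-- Large-scale `ε`-strategy-proofness w.r.t. coarse i.i.d. beliefs, with rate `p`. -/
def LargeScaleSP (v : (n : ℕ) → (Fin n → Pref C) → C → ℝ) (ε : ℕ → ℝ) (p : ℝ → ℝ) : Prop :=
  ∀ α : ℝ, 0 < α → ∀ n : ℕ, p (1 / α) ≤ (n : ℝ) →
    ∀ i : Fin n, ∀ Pi Pi' : Pref C, ∀ φ : Pref C → ℝ, IsBelief φ → CoarseBelief α φ →
      ∀ u : C → ℝ, Utility01 u → CoarseUtility α u → ConsistentOn Finset.univ u Pi →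
        EU (v n) u φ i Pi' - ε n ≤ EU (v n) u φ i Pi

/-- The restriction of a belief to the candidate subset `A`. -/
noncomputable def beliefRestrict (φ : Pref C → ℝ) (A : Finset C) : PrefOn C A → ℝ :=
  fun Q => ∑ P : Pref C, if P.restrictTo A = Q then φ P else 0

/-- The punishing voting rule: choose a uniform voter, then her `j`-th ranked candidate
with probability proportional to `m - j`. -/
noncomputable def vPunish (n : ℕ) (P : Fin n → Pref C) (x : C) : ℝ :=
  (1 / (n : ℝ)) * ∑ i : Fin n,
    (((Fintype.card C : ℝ) - ((P i).1.idxOf x + 1)) /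
      (∑ ℓ ∈ Finset.range (Fintype.card C), ((Fintype.card C : ℝ) - ((ℓ : ℝ) + 1))))

end VotingPrelims

section MorePrelims

variable {C : Type} [Fintype C] [DecidableEq C]

/-- `x` is directly above `y` in the preference ordering `P`. -/
def DirectlyAbove (P : Pref C) (x y : C) : Prop :=
  P.pref x y ∧ ∀ z : C, z ≠ x → z ≠ y → (P.pref z x ↔ P.pref z y)

/-- The preference obtained from `P` by exchanging the positions of `x` and `y`. -/
def Pref.swapC (P : Pref C) (x y : C) : Pref C :=
  ⟨P.1.map (Equiv.swap x y), P.2.1.map (Equiv.injective _), by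
    apply Finset.eq_univ_iff_forall.mpr
    intro z
    rw [List.mem_toFinset, List.mem_map]
    exact ⟨Equiv.swap x y z, Pref.mem_list P _, Equiv.swap_apply_self x y z⟩⟩

/-- Pairwise responsiveness. -/
def PairwiseResponsive {n : ℕ} (v : (Fin n → Pref C) → C → ℝ) : Prop :=
  ∀ P : Fin n → Pref C, ∀ i : Fin n, ∀ x y : C, DirectlyAbove (P i) x y →
    ∀ z : C, z ≠ x → z ≠ y →
      v (Function.update P i ((P i).swapC x y)) z = v P z

/-- Pairwise isolation. -/
def PairwiseIsolated {n : ℕ} (v : (Fin n → Pref C) → C → ℝ) : Prop :=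
  ∀ x y : C, ∀ i : Fin n, ∀ P P' : Fin n → Pref C,
    DirectlyAbove (P i) x y → P' i = P i →
    (∀ j : Fin n, (P j).pref x y ↔ (P' j).pref x y) →
      v (Function.update P' i ((P' i).swapC x y)) y - v P' y
        = v (Function.update P i ((P i).swapC x y)) y - v P y

/-- The ordering that puts `x` on top, with the rest ordered as in `a`. -/
def prefTopList (a : Pref C) (x : C) : Pref C :=
  ⟨x :: a.1.erase x, by
    rw [List.nodup_cons]
    exact ⟨a.2.1.not_mem_erase, a.2.1.erase x⟩, by
    apply Finset.eq_univ_iff_forall.mpr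
    intro z
    rw [List.mem_toFinset, List.mem_cons]
    by_cases hz : z = x
    · exact Or.inl hz
    · exact Or.inr ((List.mem_erase_of_ne hz).mpr (Pref.mem_list a z))⟩

/-- The ordering `a` with `x` moved to the bottom. -/
def prefBotList (a : Pref C) (x : C) : Pref C :=
  ⟨a.1.erase x ++ [x], by
    rw [List.nodup_append]
    exact ⟨a.2.1.erase x, List.nodup_singleton x,
      fun z hz y hy hzy => absurd hz (by
        rw [hzy, List.mem_singleton.mp hy]; exact a.2.1.not_mem_erase)⟩, by
    apply Finset.eq_univ_iff_forall.mpr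
    intro z
    rw [List.mem_toFinset, List.mem_append, List.mem_singleton]
    by_cases hz : z = x
    · exact Or.inr hz
    · exact Or.inl ((List.mem_erase_of_ne hz).mpr (Pref.mem_list a z))⟩

/-- The profile `P⃗^{x,j}`: the first `j` voters rank `x` first followed by the remaining
candidates in the order `a`; the remaining voters use `a` with `x` moved to the bottom. -/
def profileXJ (a : Pref C) (x : C) (j : ℕ) (n : ℕ) : Fin n → Pref C :=
  fun i => if (i : ℕ) < j then prefTopList a x else prefBotList a x

/-- `v'(x,j)`: the selection probability of `x` on the profile `P⃗^{x,j}`. -/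
def vPrime {n : ℕ} (v : (Fin n → Pref C) → C → ℝ) (a : Pref C) (x : C) (j : ℕ) : ℝ :=
  v (profileXJ a x j n) x

/-- One round of repeated-plurality elimination with margin `T`: keep exactly the
candidates of `S` whose top-choice count is within `T` of the highest count. -/
noncomputable def plStep [Nonempty C] {n : ℕ} (P : Fin n → Pref C) (T : ℝ) (S : Finset C) :
    Finset C :=
  S.filter (fun x => ((S.sup (countTop P S) : ℕ) : ℝ) ≤ (countTop P S x : ℝ) + T)

/-- The set of remaining candidates after repeated-plurality elimination. -/
noncomputable def plFinal [Nonempty C] {n : ℕ} (P : Fin n → Pref C) (T : ℝ) : Finset C :=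
  (fun S => plStep P T S)^[Fintype.card C] Finset.univ

/-- The plurality winner among `S`, with ties broken by `tb`. -/
noncomputable def pluralityWinner [Nonempty C] {n : ℕ} (tb : Finset C → C)
    (P : Fin n → Pref C) (S : Finset C) : C :=
  tb (S.filter (fun x => countTop P S x = S.sup (countTop P S)))

/-- Repeated Plurality Elimination + Plurality Selection. -/
noncomputable def vPl [Nonempty C] (δ : ℝ) (tb : Finset C → C) (n : ℕ)
    (P : Fin n → Pref C) (x : C) : ℝ :=
  if x = pluralityWinner tb P (plFinal P ((n : ℝ) ^ ((1 : ℝ) / 2 + δ))) then 1 else 0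

/-- One round of approximate instant-runoff elimination with margin `T`: eliminate the
candidates of `S` whose top-choice count is within `T` of the least count, unless this
would eliminate everyone. -/
noncomputable def irvStep [Nonempty C] {n : ℕ} (P : Fin n → Pref C) (T : ℝ) (S : Finset C) :
    Finset C :=
  if h : S.Nonempty then
    let E := S.filter (fun x =>
      (countTop P S x : ℝ) ≤ (((S.image (countTop P S)).min' (h.image _) : ℕ) : ℝ) + T)
    if E = S then S else S \ E
  else S

/-- The set of remaining candidates after approximate instant-runoff elimination. -/
noncomputable def irvFinal [Nonempty C] {n : ℕ} (P : Fin n → Pref C) (T : ℝ) : Finset C :=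
  (fun S => irvStep P T S)^[Fintype.card C] Finset.univ

/-- Approximate Instant-Runoff Voting. -/
noncomputable def vIrv [Nonempty C] (δ : ℝ) (tb : Finset C → C) (n : ℕ)
    (P : Fin n → Pref C) (x : C) : ℝ :=
  if x = pluralityWinner tb P (irvFinal P ((n : ℝ) ^ ((1 : ℝ) / 2 + δ))) then 1 else 0

/-- The position (0-indexed rank) of candidate `x` in the ordering `P`. -/
def Pref.rank (P : Pref C) (x : C) : Fin (Fintype.card C) :=
  ⟨P.1.idxOf x, by
    have hx : x ∈ P.1 := Pref.mem_list P x
    have hlen : P.1.length = Fintype.card C := by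
      rw [← List.toFinset_card_of_nodup P.2.1, P.2.2, Finset.card_univ]
    rw [← hlen]
    exact List.idxOf_lt_length_iff.mpr hx⟩

/-- The score of candidate `x` under the positional scoring rule with points vector `pv`. -/
def scoreOf (pv : Fin (Fintype.card C) → ℕ) {n : ℕ} (P : Fin n → Pref C) (x : C) : ℕ :=
  ∑ i : Fin n, pv ((P i).rank x)

/-- Scoring Rule Elimination + Input-Independent Selection. -/
noncomputable def vScore (δ : ℝ) (pv : Fin (Fintype.card C) → ℕ) (sel : Finset C → C → ℝ)
    (n : ℕ) (P : Fin n → Pref C) (x : C) : ℝ :=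
  sel (Finset.univ.filter (fun y =>
    ((Finset.univ.sup (scoreOf pv P) : ℕ) : ℝ) ≤ (scoreOf pv P y : ℝ) + (n : ℝ) ^ ((1 : ℝ) / 2 + δ))) x

end MorePrelims


section Stmt2Aux

variable {C : Type} [Fintype C] [DecidableEq C] [Nonempty C]

instance : Nonempty (Pref C) :=
  ⟨⟨Finset.univ.toList, Finset.nodup_toList _, Finset.toList_toFinset _⟩⟩

theorem Pref.list_ne_nil (P : Pref C) : P.1 ≠ [] := by
  intro h
  have h2 := P.2.2
  rw [h] at h2
  simp only [List.toFinset_nil] at h2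
  exact absurd (h2 ▸ Finset.mem_univ (Classical.arbitrary C)) (Finset.notMem_empty _)

theorem Pref.top_cons (P : Pref C) {x : C} (h : P.top = x) : ∃ l, P.1 = x :: l := by
  cases hP : P.1 with
  | nil => exact absurd hP (Pref.list_ne_nil P)
  | cons y l =>
    have hy : P.top = y := by unfold Pref.top; rw [hP]; rfl
    exact ⟨l, by rw [show x = y from h ▸ hy]⟩

theorem combine_apply_same {A : Finset C} {n : ℕ} (i : Fin n) (Pi : PrefOn C A)
    (R : {j : Fin n // j ≠ i} → PrefOn C A) : combine i Pi R i = Pi := dif_pos rfl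

theorem combine_apply_ne {A : Finset C} {n : ℕ} (i : Fin n) (Pi : PrefOn C A)
    (R : {j : Fin n // j ≠ i} → PrefOn C A) (j : Fin n) (h : j ≠ i) :
    combine i Pi R j = R ⟨j, h⟩ := dif_neg h

/-- base-n digit uniqueness -/
theorem digitsUnique (n : ℕ) (hn : 2 ≤ n) :
    ∀ N (m m' : ℕ → ℕ), (∀ a, m a < n) → (∀ a, m' a < n) →
      (∑ a ∈ Finset.range N, m a * n ^ a) = (∑ a ∈ Finset.range N, m' a * n ^ a) →
      ∀ a, a < N → m a = m' a := by
  intro N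
  induction N with
  | zero => intro _ _ _ _ _ a ha; omega
  | succ N ih =>
    intro m m' hm hm' hsum a ha
    rw [Finset.sum_range_succ', Finset.sum_range_succ'] at hsum
    have e1 : ∀ (m : ℕ → ℕ), ∑ k ∈ Finset.range N, m (k+1) * n ^ (k+1)
        = n * ∑ k ∈ Finset.range N, m (k+1) * n ^ k := by
      intro m; rw [Finset.mul_sum]; apply Finset.sum_congr rfl; intro k _; ring
    rw [e1 m, e1 m', pow_zero, mul_one, mul_one] at hsum
    set S := ∑ k ∈ Finset.range N, m (k+1) * n ^ k with hS_def
    set S' := ∑ k ∈ Finset.range N, m' (k+1) * n ^ k with hS'_def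
    have h0 : m 0 = m' 0 := by
      have hmod := congrArg (· % n) hsum
      simpa [Nat.mul_add_mod, Nat.mod_eq_of_lt (hm 0), Nat.mod_eq_of_lt (hm' 0)] using hmod
    have hS : S = S' := by
      have hns : n * S = n * S' := by omega
      exact Nat.eq_of_mul_eq_mul_left (by omega) hns
    rcases a with _ | b
    · exact h0
    · exact ih (fun k => m (k+1)) (fun k => m' (k+1)) (fun k => hm _) (fun k => hm' _) hS b
        (by omega)

/-- The key step: changing a single voter's report between two orderings with the
same top does not change the probability of that top candidate. -/
theorem stmt2_step {n : ℕ} (v : (Fin n → Pref C) → C → ℝ) (hv : IsVotingRule v)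
    (hanon : Anonymous v) (hsp : WeaklySP v) (x : C) (i : Fin n)
    (Pi Pi' : Pref C) (hPi : Pi.top = x) (hPi' : Pi'.top = x)
    (R : {j : Fin n // j ≠ i} → Pref C) :
    v (combine i Pi R) x = v (combine i Pi' R) x := by
  classical
  set E : (Pref C → ℝ) → Pref C → ℝ := fun φ Q =>
    ∑ R' : {j : Fin n // j ≠ i} → Pref C, (∏ j, φ (R' j)) * v (combine i Q R') x with hE
  set c : ({j : Fin n // j ≠ i} → Pref C) → ℝ := fun R' =>
    v (combine i Pi R') x - v (combine i Pi' R') x with hc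
  suffices hcR : c R = 0 by
    have : v (combine i Pi R) x - v (combine i Pi' R) x = 0 := hcR
    linarith
  -- sum of products of a belief is 1
  have hsum1 : ∀ φ : Pref C → ℝ, (∑ Q, φ Q) = 1 →
      (∑ R' : {j : Fin n // j ≠ i} → Pref C, ∏ j, φ (R' j)) = 1 := by
    intro φ hφ
    have h := Finset.sum_prod_piFinset (Finset.univ : Finset (Pref C))
      (fun (_ : {j : Fin n // j ≠ i}) q => φ q)
    rw [Fintype.piFinset_univ] at h
    rw [h, Finset.prod_congr rfl (fun j _ => hφ), Finset.prod_const_one]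
  -- bounds on expected utility
  have hEUb : ∀ (φ : Pref C → ℝ), IsBelief φ → ∀ (u : C → ℝ) (η : ℝ), 0 ≤ η → u x = 1 →
      (∀ y, 0 ≤ u y) → (∀ y, y ≠ x → u y ≤ η) → ∀ Q : Pref C,
      E φ Q ≤ EU v u φ i Q ∧ EU v u φ i Q ≤ E φ Q + η := by
    intro φ hφ u η hη hux hu0 huη Q
    have hw0 : ∀ R' : {j : Fin n // j ≠ i} → Pref C, 0 ≤ ∏ j, φ (R' j) :=
      fun R' => Finset.prod_nonneg fun j _ => hφ.1 _
    have hEU : EU v u φ i Q = ∑ R' : {j : Fin n // j ≠ i} → Pref C,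
        (∏ j, φ (R' j)) * ∑ y, v (combine i Q R') y * u y := rfl
    have hinner : ∀ R' : {j : Fin n // j ≠ i} → Pref C,
        v (combine i Q R') x ≤ (∑ y, v (combine i Q R') y * u y) ∧
        (∑ y, v (combine i Q R') y * u y) ≤ v (combine i Q R') x + η := by
      intro R'
      obtain ⟨hd0, hd1⟩ := hv (combine i Q R')
      constructor
      · have h := Finset.single_le_sum (f := fun y => v (combine i Q R') y * u y)
          (fun y _ => mul_nonneg (hd0 y) (hu0 y)) (Finset.mem_univ x)
        simpa [hux] using h
      · rw [← Finset.add_sum_erase _ _ (Finset.mem_univ x), hux, mul_one]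
        have h1 : ∑ y ∈ Finset.univ.erase x, v (combine i Q R') y * u y ≤
            ∑ y ∈ Finset.univ.erase x, v (combine i Q R') y * η :=
          Finset.sum_le_sum fun y hy => mul_le_mul_of_nonneg_left
            (huη y (Finset.ne_of_mem_erase hy)) (hd0 y)
        have h2 : ∑ y ∈ Finset.univ.erase x, v (combine i Q R') y ≤ 1 := by
          rw [← hd1]
          exact Finset.sum_le_sum_of_subset_of_nonneg (Finset.subset_univ _)
            (fun y _ _ => hd0 y)
        have h3 : ∑ y ∈ Finset.univ.erase x, v (combine i Q R') y * η ≤ η := by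
          rw [← Finset.sum_mul]
          calc (∑ y ∈ Finset.univ.erase x, v (combine i Q R') y) * η ≤ 1 * η :=
                mul_le_mul_of_nonneg_right h2 hη
            _ = η := one_mul η
        linarith
    constructor
    · rw [hEU, hE]
      exact Finset.sum_le_sum fun R' _ =>
        mul_le_mul_of_nonneg_left (hinner R').1 (hw0 R')
    · rw [hEU, hE]
      calc ∑ R' : {j : Fin n // j ≠ i} → Pref C,
            (∏ j, φ (R' j)) * ∑ y, v (combine i Q R') y * u y
          ≤ ∑ R' : {j : Fin n // j ≠ i} → Pref C,
            (∏ j, φ (R' j)) * (v (combine i Q R') x + η) :=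
            Finset.sum_le_sum fun R' _ =>
              mul_le_mul_of_nonneg_left (hinner R').2 (hw0 R')
        _ = (∑ R' : {j : Fin n // j ≠ i} → Pref C,
              (∏ j, φ (R' j)) * v (combine i Q R') x) + η := by
            simp only [mul_add]
            rw [Finset.sum_add_distrib, ← Finset.sum_mul, hsum1 φ hφ.2, one_mul]
  -- equality of expected probabilities for truthful top-x reports
  have hEeq : ∀ φ : Pref C → ℝ, IsBelief φ → E φ Pi = E φ Pi' := by
    have key : ∀ (Pa Pb : Pref C), Pa.top = x → Pb.top = x →
        ∀ φ : Pref C → ℝ, IsBelief φ → E φ Pb ≤ E φ Pa := by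
      intro Pa Pb ha hb φ hφ
      refine le_of_forall_pos_le_add ?_
      intro ε' hε'
      set η : ℝ := min ε' (1/2) with hη_def
      have hη0 : 0 < η := lt_min hε' (by norm_num)
      have hη1 : η < 1 := lt_of_le_of_lt (min_le_right _ _) (by norm_num)
      set u : C → ℝ := fun y => η ^ (Pa.1.idxOf y) with hu_def
      obtain ⟨l, hl⟩ := Pref.top_cons Pa ha
      have hux : u x = 1 := by
        rw [hu_def]; simp only [hl, List.idxOf_cons_self, pow_zero]
      have hu0 : ∀ y, 0 ≤ u y := fun y => pow_nonneg hη0.le _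
      have hu1 : ∀ y, u y ≤ 1 := fun y => pow_le_one₀ hη0.le hη1.le
      have huη : ∀ y, y ≠ x → u y ≤ η := by
        intro y hy
        rw [hu_def]
        simp only [hl, List.idxOf_cons_ne _ (Ne.symm hy), Nat.succ_eq_add_one]
        rw [pow_succ]
        calc η ^ (List.idxOf y l) * η ≤ 1 * η :=
              mul_le_mul_of_nonneg_right (pow_le_one₀ hη0.le hη1.le) hη0.le
          _ = η := one_mul η
      have hcons : ConsistentOn Finset.univ u Pa := by
        intro y _ z _
        exact pow_lt_pow_iff_right_of_lt_one₀ hη0 hη1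
      have hsp' := hsp i Pa Pb φ (Set.mem_univ φ) hφ u (fun y => ⟨hu0 y, hu1 y⟩) hcons
      obtain ⟨hbl, _⟩ := hEUb φ hφ u η hη0.le hux hu0 huη Pb
      obtain ⟨_, hau⟩ := hEUb φ hφ u η hη0.le hux hu0 huη Pa
      have hηε : η ≤ ε' := min_le_left _ _
      linarith
    intro φ hφ
    exact le_antisymm (key Pi' Pi hPi' hPi φ hφ) (key Pi Pi' hPi hPi' φ hφ)
  -- the weighted sum of c vanishes for every belief
  have hczero : ∀ φ : Pref C → ℝ, IsBelief φ →
      (∑ R' : {j : Fin n // j ≠ i} → Pref C, (∏ j, φ (R' j)) * c R') = 0 := by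
    intro φ hφ
    have h := hEeq φ hφ
    simp only [hE] at h
    simp only [hc, mul_sub]
    rw [Finset.sum_sub_distrib, h, sub_self]
  by_cases hn2 : 2 ≤ n
  · -- polynomial argument
    set N := Fintype.card (Pref C) with hN
    set idx : Pref C ≃ Fin N := Fintype.equivFin (Pref C) with hidx
    set e : ({j : Fin n // j ≠ i} → Pref C) → ℕ :=
      fun R' => ∑ j, n ^ ((idx (R' j) : ℕ)) with he
    set p : Polynomial ℝ := ∑ R' : {j : Fin n // j ≠ i} → Pref C,
      Polynomial.C (c R') * Polynomial.X ^ (e R') with hp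
    have hφt : ∀ t : ℝ, 0 < t →
        (∑ R' : {j : Fin n // j ≠ i} → Pref C,
          (∏ j, t ^ (n ^ ((idx (R' j) : ℕ)))) * c R') = 0 := by
      intro t ht
      set φt : Pref C → ℝ := fun Q => t ^ (n ^ ((idx Q : ℕ))) with hφt_def
      have hpos : ∀ Q, 0 < φt Q := fun Q => pow_pos ht _
      set s : ℝ := ∑ Q, φt Q with hs
      have hspos : 0 < s := Finset.sum_pos (fun Q _ => hpos Q) Finset.univ_nonempty
      set ψ : Pref C → ℝ := fun Q => φt Q * s⁻¹ with hψ_def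
      have hψ : IsBelief ψ := by
        constructor
        · intro Q; exact mul_nonneg (hpos Q).le (inv_nonneg.mpr hspos.le)
        · rw [← Finset.sum_mul, ← hs, mul_inv_cancel₀ hspos.ne']
      have h0 := hczero ψ hψ
      set k := Fintype.card {j : Fin n // j ≠ i} with hk
      have hprod : ∀ R' : {j : Fin n // j ≠ i} → Pref C,
          ∏ j, ψ (R' j) = (∏ j, φt (R' j)) * (s⁻¹) ^ k := by
        intro R'
        rw [hψ_def]
        rw [Finset.prod_mul_distrib, Finset.prod_const, Finset.card_univ]
      have h1 : ((s⁻¹) ^ k) * (∑ R' : {j : Fin n // j ≠ i} → Pref C,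
          (∏ j, φt (R' j)) * c R') = 0 := by
        rw [Finset.mul_sum, ← h0]
        apply Finset.sum_congr rfl
        intro R' _
        rw [hprod R']
        ring
      have hne : ((s⁻¹) ^ k) ≠ 0 := pow_ne_zero _ (inv_ne_zero hspos.ne')
      exact (mul_eq_zero.mp h1).resolve_left hne
    have hproots : Set.Ioo (0:ℝ) 1 ⊆ {t | p.IsRoot t} := by
      intro t ht
      show p.eval t = 0
      rw [hp, Polynomial.eval_finset_sum]
      simp only [Polynomial.eval_mul, Polynomial.eval_C, Polynomial.eval_pow,
        Polynomial.eval_X]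
      rw [← hφt t ht.1]
      apply Finset.sum_congr rfl
      intro R' _
      simp only [he]
      rw [← Finset.prod_pow_eq_pow_sum]
      ring
    have hp0 : p = 0 := Polynomial.eq_zero_of_infinite_isRoot p
      ((Set.Ioo_infinite (by norm_num)).mono hproots)
    have hc0 : p.coeff (e R) = 0 := by rw [hp0]; simp
    rw [hp, Polynomial.finset_sum_coeff] at hc0
    simp only [Polynomial.coeff_C_mul, Polynomial.coeff_X_pow, mul_ite, mul_one,
      mul_zero] at hc0
    -- every R' with the same exponent has the same c-value
    have hcard : Fintype.card {j : Fin n // j ≠ i} = n - 1 := by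
      have h := Fintype.card_subtype_compl (fun j : Fin n => j = i)
      simpa [Fintype.card_subtype_eq] using h
    set m : ({j : Fin n // j ≠ i} → Pref C) → Fin N → ℕ := fun Rf b =>
      (Finset.univ.filter fun j : {j : Fin n // j ≠ i} => idx (Rf j) = b).card with hm_def
    have hmlt : ∀ Rf b, m Rf b < n := by
      intro Rf b
      have h1 : m Rf b ≤ n - 1 := by
        rw [← hcard, ← Finset.card_univ]
        exact Finset.card_filter_le _ _
      omega
    have hel : ∀ Rf : {j : Fin n // j ≠ i} → Pref C,
        e Rf = ∑ b : Fin N, m Rf b * n ^ (b : ℕ) := by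
      intro Rf
      simp only [he]
      rw [← Finset.sum_fiberwise Finset.univ (fun j => idx (Rf j))
        (fun j => n ^ ((idx (Rf j) : ℕ)))]
      apply Finset.sum_congr rfl
      intro b _
      rw [Finset.sum_congr rfl (fun j hj => by rw [(Finset.mem_filter.mp hj).2]),
        Finset.sum_const, smul_eq_mul]
    have hperm : ∀ R' : {j : Fin n // j ≠ i} → Pref C, e R' = e R → c R' = c R := by
      intro R' hee
      set M : ({j : Fin n // j ≠ i} → Pref C) → ℕ → ℕ := fun Rf a =>
        if h : a < N then m Rf ⟨a, h⟩ else 0 with hM_def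
      have hMlt : ∀ Rf a, M Rf a < n := by
        intro Rf a
        simp only [hM_def]
        by_cases h : a < N
        · rw [dif_pos h]; exact hmlt Rf ⟨a, h⟩
        · rw [dif_neg h]; omega
      have hrange : ∀ Rf : {j : Fin n // j ≠ i} → Pref C,
          (∑ b : Fin N, m Rf b * n ^ (b:ℕ)) = ∑ a ∈ Finset.range N, M Rf a * n ^ a := by
        intro Rf
        rw [← Fin.sum_univ_eq_sum_range (fun a => M Rf a * n ^ a) N]
        apply Finset.sum_congr rfl
        intro b _
        simp only [hM_def, dif_pos b.isLt, Fin.eta]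
      have hmm : ∀ b : Fin N, m R' b = m R b := by
        intro b
        have hs : (∑ a ∈ Finset.range N, M R' a * n ^ a)
            = ∑ a ∈ Finset.range N, M R a * n ^ a := by
          rw [← hrange, ← hrange, ← hel, ← hel, hee]
        have h := digitsUnique n hn2 N (M R') (M R) (hMlt R') (hMlt R) hs (b:ℕ) b.isLt
        simp only [hM_def, dif_pos b.isLt, Fin.eta] at h
        exact h
      have hfib : ∀ b : Fin N,
          Fintype.card {j : {j : Fin n // j ≠ i} // idx (R' j) = b}
            = Fintype.card {j : {j : Fin n // j ≠ i} // idx (R j) = b} := by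
        intro b
        rw [Fintype.card_subtype, Fintype.card_subtype]
        exact hmm b
      set σ : {j : Fin n // j ≠ i} ≃ {j : Fin n // j ≠ i} :=
        Equiv.ofFiberEquiv (f := fun j => idx (R' j)) (g := fun j => idx (R j))
          (fun b => Fintype.equivOfCardEq (hfib b)) with hσ_def
      have hσ : ∀ j, R (σ j) = R' j := by
        intro j
        apply idx.injective
        rw [hσ_def]
        exact Equiv.ofFiberEquiv_map (fun b => Fintype.equivOfCardEq (hfib b)) j
      set τ : Equiv.Perm (Fin n) :=
        Equiv.Perm.subtypeCongr σ (Equiv.refl {j : Fin n // ¬ j ≠ i}) with hτ_def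
      have hτi : τ i = i := by
        rw [hτ_def, Equiv.Perm.subtypeCongr.apply]
        rw [dif_neg (by simp : ¬ (i ≠ i))]
        rfl
      have hτj : ∀ (j : Fin n) (h : j ≠ i), τ j = ((σ ⟨j, h⟩ : {j : Fin n // j ≠ i}) : Fin n) := by
        intro j h
        rw [hτ_def, Equiv.Perm.subtypeCongr.apply, dif_pos h]
      have hcomb : ∀ Pq : Pref C,
          (fun j => combine i Pq R (τ j)) = combine i Pq R' := by
        intro Pq
        funext j
        by_cases hj : j = i
        · subst hj
          rw [hτi, combine_apply_same, combine_apply_same]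
        · rw [hτj j hj, combine_apply_ne i Pq R' j hj]
          have hσne : ((σ ⟨j, hj⟩ : {j : Fin n // j ≠ i}) : Fin n) ≠ i := (σ ⟨j, hj⟩).2
          rw [combine_apply_ne i Pq R _ hσne]
          exact hσ ⟨j, hj⟩
      have h1 := hanon τ (combine i Pi R)
      rw [hcomb Pi] at h1
      have h2 := hanon τ (combine i Pi' R)
      rw [hcomb Pi'] at h2
      rw [hc]
      simp only
      rw [h1, h2]
    have hfin : (∑ R' : {j : Fin n // j ≠ i} → Pref C,
        if e R = e R' then c R else 0) = 0 := by
      have heq : (∑ R' : {j : Fin n // j ≠ i} → Pref C, if e R = e R' then c R else 0)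
          = ∑ R' : {j : Fin n // j ≠ i} → Pref C, if e R = e R' then c R' else 0 := by
        apply Finset.sum_congr rfl
        intro R' _
        by_cases h : e R = e R'
        · rw [if_pos h, if_pos h, hperm R' h.symm]
        · rw [if_neg h, if_neg h]
      rw [heq]
      exact hc0
    rw [← Finset.sum_filter] at hfin
    rw [Finset.sum_const, nsmul_eq_mul] at hfin
    have hRmem : R ∈ Finset.univ.filter (fun R' : {j : Fin n // j ≠ i} → Pref C =>
        e R = e R') := Finset.mem_filter.mpr ⟨Finset.mem_univ R, rfl⟩
    have hcpos : (0:ℝ) < ((Finset.univ.filter (fun R' : {j : Fin n // j ≠ i} → Pref C =>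
        e R = e R')).card : ℝ) := by
      have := Finset.card_pos.mpr ⟨R, hRmem⟩
      exact_mod_cast this
    have := mul_eq_zero.mp hfin
    rcases this with h | h
    · exact absurd h (ne_of_gt hcpos)
    · exact h
  · -- n = 1 : there are no other voters
    have hn1 : n = 1 := by
      have := i.isLt
      omega
    haveI hJe : IsEmpty {j : Fin n // j ≠ i} := by
      constructor
      rintro ⟨j, hj⟩
      apply hj
      subst hn1
      exact Subsingleton.elim j i
    haveI : Unique ({j : Fin n // j ≠ i} → Pref C) := _root_.Pi.uniqueOfIsEmpty _
    set φu : Pref C → ℝ := fun _ => ((Fintype.card (Pref C) : ℝ))⁻¹ with hφu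
    have hcard0 : (Fintype.card (Pref C) : ℝ) ≠ 0 := by
      have := Fintype.card_pos (α := Pref C)
      positivity
    have hbel : IsBelief φu := by
      constructor
      · intro Q; rw [hφu]; positivity
      · rw [hφu]
        rw [Finset.sum_const, Finset.card_univ, nsmul_eq_mul, mul_inv_cancel₀ hcard0]
    have h0 := hczero φu hbel
    rw [Fintype.sum_unique] at h0
    rw [Finset.univ_eq_empty, Finset.prod_empty, one_mul] at h0
    rw [show R = default from Unique.eq_default R]
    exact h0

end Stmt2Aux

/-- An anonymous, weakly strategy-proof voting rule satisfying
`ε`-super-weak unanimity satisfies `ε`-strong unanimity. -/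
theorem stmt2 {C : Type} [Fintype C] [DecidableEq C] [Nonempty C] {n : ℕ}
    (v : (Fin n → Pref C) → C → ℝ) (ε : ℝ) (hv : IsVotingRule v) (hanon : Anonymous v)
    (hsp : WeaklySP v) (hswu : SuperWeakUnanimity v ε) :
    StrongUnanimity v ε := by
  intro x P htop
  obtain ⟨Q, hQtop, hQv⟩ := hswu x
  set H : ℕ → (Fin n → Pref C) := fun k j => if (j:ℕ) < k then Q j else P j with hH
  have hstep : ∀ k, k < n → v (H k) x = v (H (k+1)) x := by
    intro k hk
    set i : Fin n := ⟨k, hk⟩ with hi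
    set R : {j : Fin n // j ≠ i} → Pref C := fun j => H k j.1 with hR
    have h1 : combine i (P i) R = H k := by
      funext j
      by_cases hj : j = i
      · subst hj
        rw [combine_apply_same]
        simp [hH, hi]
      · rw [combine_apply_ne i _ R j hj]
    have h2 : combine i (Q i) R = H (k+1) := by
      funext j
      by_cases hj : j = i
      · subst hj
        rw [combine_apply_same]
        simp [hH, hi]
      · rw [combine_apply_ne i _ R j hj]
        have hne : (j:ℕ) ≠ k := fun hc => hj (Fin.ext hc)
        have hiff : ((j:ℕ) < k + 1) ↔ ((j:ℕ) < k) := by omega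
        show H k j = H (k+1) j
        simp only [hH]
        rw [if_congr hiff.symm rfl rfl]
    have := stmt2_step v hv hanon hsp x i (P i) (Q i) (htop i) (hQtop i) R
    rw [h1, h2] at this
    exact this
  have hchain : ∀ k, k ≤ n → v (H 0) x = v (H k) x := by
    intro k
    induction k with
    | zero => intro _; rfl
    | succ k ih =>
      intro hk
      rw [ih (by omega)]
      exact hstep k (by omega)
  have hH0 : H 0 = P := by
    funext j; simp [hH]
  have hHn : H n = Q := by
    funext j; simp [hH, j.isLt]
  have := hchain n le_rfl
  rw [hH0, hHn] at this
  rw [← this] at hQv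
  exact hQv
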